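/- Let d, n be positive integers and let Ω₁, …, Ωₙ be nonempty compact convex subsets of ℝ^d. Let X be the convex hull of ⋃ᵢ Ωᵢ, V = Ω₁ × ⋯ × Ωₙ, Y = { ((y₁,s₁),…,(yₙ,sₙ)) : ‖yᵢ‖ ≤ sᵢ for all i, ∑ᵢ sᵢ = 1 }, f(x, v, y) = ∑ᵢ ⟨x − vᵢ, yᵢ⟩, and R* = inf over x ∈ ℝ^d of max over i of sup over v ∈ Ωᵢ of ‖x − v‖. If (x*, y*, v₁*, …, vₙ*) is a Nash equilibrium of the game min over X, max over Y × V of f, then f(x*, v*, y*) = R* and the closed ball of center x* and radius R* encloses every Ωᵢ, i.e., ‖x* − v‖ ≤ R* for every i and every v ∈ Ωᵢ. -/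

import Mathlib

/-- **SEB game: Nash equilibria give the SEB.** If `(x*, y*, v*)` is a Nash equilibrium
of the SEB game `min_{x ∈ X} max_{(y, v) ∈ Y × V} f`, then the value `f(x*, v*, y*)`
equals the SEB radius `R* = inf_x max_i sup_{v ∈ Ωᵢ} ‖x - v‖`, and the closed ball
`B(x*, R*)` encloses every `Ωᵢ`. -/
theorem seb_game_nash_gives_seb (d n : ℕ) (hd : 0 < d) (hn : 0 < n)
    (Ω : Fin n → Set (EuclideanSpace ℝ (Fin d)))
    (hne : ∀ i, (Ω i).Nonempty) (hcpt : ∀ i, IsCompact (Ω i))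
    (hconv : ∀ i, Convex ℝ (Ω i))
    (xs : EuclideanSpace ℝ (Fin d)) (ys : Fin n → (EuclideanSpace ℝ (Fin d)) × ℝ)
    (vs : Fin n → EuclideanSpace ℝ (Fin d))
    (hxs : xs ∈ convexHull ℝ (⋃ i, Ω i))
    (hys₁ : ∀ i, ‖(ys i).1‖ ≤ (ys i).2) (hys₂ : (∑ i, (ys i).2) = 1)
    (hvs : ∀ i, vs i ∈ Ω i)
    (hmin : ∀ x : EuclideanSpace ℝ (Fin d), x ∈ convexHull ℝ (⋃ i, Ω i) →
      (∑ i, (inner ℝ (xs - vs i) ((ys i).1) : ℝ)) ≤ ∑ i, (inner ℝ (x - vs i) ((ys i).1) : ℝ))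
    (hmax : ∀ (y : Fin n → (EuclideanSpace ℝ (Fin d)) × ℝ)
        (v : Fin n → EuclideanSpace ℝ (Fin d)),
      (∀ i, ‖(y i).1‖ ≤ (y i).2) → (∑ i, (y i).2) = 1 → (∀ i, v i ∈ Ω i) →
      (∑ i, (inner ℝ (xs - v i) ((y i).1) : ℝ)) ≤ ∑ i, (inner ℝ (xs - vs i) ((ys i).1) : ℝ)) :
    (∑ i, (inner ℝ (xs - vs i) ((ys i).1) : ℝ)) =
      (⨅ x : EuclideanSpace ℝ (Fin d), ⨆ i, ⨆ v : (Ω i), ‖x - v.1‖) ∧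
    (∀ i, ∀ v ∈ Ω i,
      ‖xs - v‖ ≤ ⨅ x : EuclideanSpace ℝ (Fin d), ⨆ i, ⨆ v : (Ω i), ‖x - v.1‖) := by
  classical
  haveI : Nonempty (Fin n) := ⟨⟨0, hn⟩⟩
  haveI : ∀ i, Nonempty (Ω i) := fun i => (hne i).to_subtype
  set F : ℝ := ∑ i, (inner ℝ (xs - vs i) ((ys i).1) : ℝ) with hFdef
  set R : EuclideanSpace ℝ (Fin d) → ℝ := fun x => ⨆ i, ⨆ v : (Ω i), ‖x - v.1‖ with hRdef
  -- boundedness of inner sups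
  have hbdd : ∀ (x : EuclideanSpace ℝ (Fin d)) (i : Fin n),
      BddAbove (Set.range fun v : (Ω i) => ‖x - v.1‖) := by
    intro x i
    obtain ⟨w, hw, hwmax⟩ := (hcpt i).exists_isMaxOn (hne i)
      (((continuous_const.sub continuous_id).norm
        (f := fun v : EuclideanSpace ℝ (Fin d) => x - v)).continuousOn)
    exact ⟨‖x - w‖, Set.forall_mem_range.2 fun v => hwmax v.2⟩
  have hle_R : ∀ x, ∀ i, ∀ v ∈ Ω i, ‖x - v‖ ≤ R x := by
    intro x i v hv
    have h1 : ‖x - v‖ ≤ ⨆ v : (Ω i), ‖x - v.1‖ := le_ciSup (hbdd x i) ⟨v, hv⟩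
    exact h1.trans (le_ciSup (f := fun i => ⨆ v : (Ω i), ‖x - v.1‖) (Finite.bddAbove_range _) i)
  have hR0 : ∀ x, 0 ≤ R x := fun x =>
    (norm_nonneg _).trans (hle_R x ⟨0, hn⟩ _ (hvs ⟨0, hn⟩))
  -- F is nonnegative
  have hF0 : (0 : ℝ) ≤ F := by
    have key := hmax (fun j => (0, if j = ⟨0, hn⟩ then (1:ℝ) else 0)) vs
      (fun j => by by_cases hj : j = ⟨0, hn⟩ <;> simp [hj])
      (by simp) hvs
    simpa using key
  -- the value dominates all distances ‖xs - v‖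
  have hFv : ∀ i, ∀ v ∈ Ω i, ‖xs - v‖ ≤ F := by
    intro i v hv
    rcases eq_or_ne xs v with h | h
    · rw [h, sub_self, norm_zero]; exact hF0
    have hnv : (0:ℝ) < ‖xs - v‖ := by rwa [norm_pos_iff, sub_ne_zero]
    set u : EuclideanSpace ℝ (Fin d) := ‖xs - v‖⁻¹ • (xs - v) with hu
    have hun : ‖u‖ = 1 := by
      rw [hu, norm_smul, norm_inv, norm_norm, inv_mul_cancel₀ hnv.ne']
    have key := hmax (fun j => if j = i then (u, 1) else (0, 0)) (Function.update vs i v)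
      (fun j => by by_cases hj : j = i <;> simp [hj, hun])
      (by simp [apply_ite Prod.snd, Finset.sum_ite_eq'])
      (fun j => by
        rcases eq_or_ne j i with hj | hj
        · subst hj; simpa using hv
        · simpa [Function.update_of_ne hj] using hvs j)
    have hsum : ∑ j, (inner ℝ (xs - Function.update vs i v j)
        ((if j = i then ((u, 1) : EuclideanSpace ℝ (Fin d) × ℝ) else (0, 0)).1) : ℝ)
        = ‖xs - v‖ := by
      rw [Finset.sum_eq_single i]
      · rw [if_pos rfl, Function.update_self]
        simp only [hu, real_inner_smul_right, real_inner_self_eq_norm_sq]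
        field_simp
      · intro j _ hj; simp [hj]
      · simp
    rw [hsum] at key
    exact key
  have hRxs_le_F : R xs ≤ F :=
    ciSup_le fun i => ciSup_le fun v => hFv i v.1 v.2
  -- setup for the other inequality
  set X : Set (EuclideanSpace ℝ (Fin d)) := convexHull ℝ (⋃ i, Ω i) with hXdef
  have hXconv : Convex ℝ X := convex_convexHull ℝ _
  have hΩX : ∀ i, Ω i ⊆ X := fun i => (Set.subset_iUnion Ω i).trans (subset_convexHull ℝ _)
  have hKconv : Convex ℝ (closure X) := hXconv.closure
  have hKne : (closure X).Nonempty := ⟨xs, subset_closure hxs⟩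
  have hg : Continuous fun x : EuclideanSpace ℝ (Fin d) =>
      ∑ i, (inner ℝ (x - vs i) ((ys i).1) : ℝ) :=
    continuous_finset_sum _ fun i _ => (continuous_id.sub continuous_const).inner continuous_const
  have hmin' : ∀ x ∈ closure X, F ≤ ∑ i, (inner ℝ (x - vs i) ((ys i).1) : ℝ) := by
    intro x hx
    exact closure_minimal (fun z hz => hmin z hz) (isClosed_le continuous_const hg) hx
  have hFle : ∀ x, F ≤ R x := by
    intro x
    obtain ⟨x', hx'K, hx'⟩ := exists_norm_eq_iInf_of_complete_convex hKne
      isClosed_closure.isComplete hKconv x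
    have hproj : ∀ w ∈ closure X, (inner ℝ (x - x') (w - x') : ℝ) ≤ 0 :=
      (norm_eq_iInf_iff_real_inner_le_zero hKconv hx'K).1 hx'
    have hdist : ∀ w ∈ closure X, ‖x' - w‖ ≤ ‖x - w‖ := by
      intro w hw
      have expand : ‖x - w‖^2 = ‖x - x'‖^2 + 2 * (inner ℝ (x - x') (x' - w) : ℝ) + ‖x' - w‖^2 := by
        have hxw : x - w = (x - x') + (x' - w) := by abel
        rw [hxw, norm_add_sq_real]
      have hip : (0:ℝ) ≤ (inner ℝ (x - x') (x' - w) : ℝ) := by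
        have h1 := hproj w hw
        have h2 : (inner ℝ (x - x') (x' - w) : ℝ) = -(inner ℝ (x - x') (w - x') : ℝ) := by
          rw [← inner_neg_right]
          congr 1
          abel
        rw [h2]
        linarith
      have key : ‖x' - w‖^2 ≤ ‖x - w‖^2 := by nlinarith [sq_nonneg ‖x - x'‖]
      calc ‖x' - w‖ = Real.sqrt (‖x' - w‖^2) := (Real.sqrt_sq (norm_nonneg _)).symm
        _ ≤ Real.sqrt (‖x - w‖^2) := Real.sqrt_le_sqrt key
        _ = ‖x - w‖ := Real.sqrt_sq (norm_nonneg _)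
    have h1 : F ≤ ∑ i, (inner ℝ (x' - vs i) ((ys i).1) : ℝ) := hmin' x' hx'K
    have h2 : ∑ i, (inner ℝ (x' - vs i) ((ys i).1) : ℝ) ≤ R x' := by
      calc ∑ i, (inner ℝ (x' - vs i) ((ys i).1) : ℝ) ≤ ∑ i, R x' * (ys i).2 := by
            refine Finset.sum_le_sum fun i _ => ?_
            calc (inner ℝ (x' - vs i) ((ys i).1) : ℝ) ≤ ‖x' - vs i‖ * ‖(ys i).1‖ :=
                  real_inner_le_norm _ _
              _ ≤ R x' * (ys i).2 :=
                  mul_le_mul (hle_R x' i _ (hvs i)) (hys₁ i) (norm_nonneg _) (hR0 x')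
        _ = R x' := by rw [← Finset.mul_sum, hys₂, mul_one]
    have h3 : R x' ≤ R x := by
      refine ciSup_le fun i => ciSup_le fun v => ?_
      exact (hdist v.1 (subset_closure (hΩX i v.2))).trans (hle_R x i v.1 v.2)
    linarith
  have hinf_le : (⨅ x, R x) ≤ F :=
    le_trans (ciInf_le ⟨0, Set.forall_mem_range.2 fun x => hR0 x⟩ xs) hRxs_le_F
  have hle_inf : F ≤ ⨅ x, R x := le_ciInf hFle
  have heq : F = ⨅ x, R x := le_antisymm hle_inf hinf_le
  exact ⟨heq, fun i v hv => heq ▸ hFv i v hv⟩
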